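/- If α β is a reduced word, then distinct restricted shuffles of α with β (as colored words with designated red/blue positions) give pairwise distinct underlying words; i.e., the map from restricted shuffles to words is injective. -/

import Mathlib

/-- The adjacent transposition `sᵢ = (i, i+1)` as a permutation of `ℕ`. -/
def sGen (i : ℕ) : Equiv.Perm ℕ := Equiv.swap i (i + 1)

/-- The permutation represented by a word. -/
def toPerm (w : List ℕ) : Equiv.Perm ℕ := (w.map sGen).prod

/-- A word is reduced (of minimal length among words representing the same permutation). -/
def IsReducedWord (w : List ℕ) : Prop := ∀ v : List ℕ, toPerm v = toPerm w → w.length ≤ v.length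

/-- `w` is a reduced word for the permutation `ω`. -/
def IsReducedWordOf (w : List ℕ) (ω : Equiv.Perm ℕ) : Prop :=
  toPerm w = ω ∧ ∀ v : List ℕ, toPerm v = ω → w.length ≤ v.length

/-- The relation `<₁`: `β` is obtained from `α` by swapping two adjacent letters
`x, y` with `y ≥ x + 2` (the smaller letter moves right). -/
def Rel1 (α β : List ℕ) : Prop :=
  ∃ (p q : List ℕ) (x y : ℕ), x + 2 ≤ y ∧
    α = p ++ x :: y :: q ∧ β = p ++ y :: x :: q

/-- Lexicographic order (non-strict) on words. -/
def LexLe (α β : List ℕ) : Prop := α = β ∨ List.Lex (· < ·) α β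

/-- A tower word: a nonempty increasing run of consecutive integers. -/
def IsTowerWord (a : List ℕ) : Prop := a ≠ [] ∧ a.Chain' (fun x y => y = x + 1)

/-- First letter of a tower word. -/
def inn (a : List ℕ) : ℕ := a.headI

/-- Last letter of a tower word. -/
def fin' (a : List ℕ) : ℕ := a.getLastD 0

/-- `L` is the tower decomposition of `w`: a factorization into maximal tower words. -/
def IsTowerDecomp (w : List ℕ) (L : List (List ℕ)) : Prop :=
  L.flatten = w ∧ (∀ a ∈ L, IsTowerWord a) ∧
    L.Chain' (fun a b => inn b ≠ fin' a + 1)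

/-- The relation `<₂`: a directed long-braid move of a tower word past its left neighbour. -/
def Rel2 (α β : List ℕ) : Prop :=
  ∃ (A B : List (List ℕ)) (a b b1 b2 : List ℕ),
    IsTowerDecomp α (A ++ a :: b :: B) ∧
    inn a ≤ inn b ∧ inn b < fin' b ∧ fin' b < fin' a ∧
    IsTowerWord b1 ∧ (b2 = [] ∨ IsTowerWord b2) ∧ b1 ++ b2 = b ∧
    β = A.flatten ++ (b1.map (· + 1)) ++ a ++ b2 ++ B.flatten

/-- The directed-braid order: reflexive-transitive closure of `<₁ ∪ <₂`. -/
def DBraid : List ℕ → List ℕ → Prop :=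
  Relation.ReflTransGen (fun α β => Rel1 α β ∨ Rel2 α β)

/-- The natural word of `ω`: the reduced word whose tower decomposition has
strictly decreasing initial letters. -/
def IsNaturalWordOf (η : List ℕ) (ω : Equiv.Perm ℕ) : Prop :=
  IsReducedWordOf η ω ∧ ∃ L, IsTowerDecomp η L ∧ L.Chain' (fun a b => inn b < inn a)

/-- A natural basic word of `ω`: a reduced word whose tower decomposition satisfies
`fin(aᵢ) > in(aᵢ₊₁)` for all `i`. -/
def IsNaturalBasicOf (β : List ℕ) (ω : Equiv.Perm ℕ) : Prop :=
  IsReducedWordOf β ω ∧ ∃ L, IsTowerDecomp β L ∧ L.Chain' (fun a b => inn b < fin' a)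

/-- One step of the track of a letter `b` through a tower word `a`. -/
def trackStep (a : List ℕ) (b : ℕ) : Option ℕ :=
  if inn a < b ∧ b ≤ fin' a then some (b - 1)
  else if b + 2 ≤ inn a ∨ fin' a + 2 ≤ b then some b
  else none

/-- The track sequence of `b` through a list of tower words. -/
def trackSeq : ℕ → List (List ℕ) → List ℕ
  | b, [] => [b]
  | b, a :: rest =>
    match trackStep a b with
    | none => [b]
    | some b' => b :: trackSeq b' rest

/-- The tower decomposition of a word, as a function. -/
def towerDecomp : List ℕ → List (List ℕ)
  | [] => []
  | x :: xs =>
    match towerDecomp xs with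
    | [] => [[x]]
    | t :: ts => if t.headI = x + 1 then (x :: t) :: ts else [x] :: t :: ts

/-- Merge two words according to a red/blue coloring: `false` takes the next
letter of the first (red) word, `true` the next letter of the second (blue) word. -/
def merge : List Bool → List ℕ → List ℕ → List ℕ
  | [], _, _ => []
  | false :: c, as, bs => as.headI :: merge c as.tail bs
  | true :: c, as, bs => bs.headI :: merge c as bs.tail

/-- `c` is a valid restricted-shuffle plan of the red word with the blue word:
the coloring exhausts both words, and a blue letter may be placed before the
remaining red letters only if none of them equals `b - 1`, `b` or `b + 1`. -/
def ValidRS : List Bool → List ℕ → List ℕ → Prop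
  | [], as, bs => as = [] ∧ bs = []
  | false :: c, as, bs => as ≠ [] ∧ ValidRS c as.tail bs
  | true :: c, as, bs => bs ≠ [] ∧
      (∀ x ∈ as, ¬(x + 1 = bs.headI ∨ x = bs.headI ∨ x = bs.headI + 1)) ∧
      ValidRS c as bs.tail

theorem headI_mem_of_ne_nil {l : List ℕ} (h : l ≠ []) : l.headI ∈ l := by
  cases l with
  | nil => exact absurd rfl h
  | cons a as => exact List.mem_cons_self (a := a) (l := as)

theorem merge_validRS_inj : ∀ (c₁ c₂ : List Bool) (α β : List ℕ),
    ValidRS c₁ α β → ValidRS c₂ α β → merge c₁ α β = merge c₂ α β → c₁ = c₂ := by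
  intro c₁
  induction c₁ with
  | nil =>
    intro c₂ α β h1 h2 hm
    obtain ⟨ha, hb⟩ := h1; subst ha; subst hb
    cases c₂ with
    | nil => rfl
    | cons y c' => cases y <;> simp [ValidRS] at h2
  | cons x c ih =>
    intro c₂ α β h1 h2 hm
    cases c₂ with
    | nil =>
      obtain ⟨ha, hb⟩ := h2; subst ha; subst hb
      cases x <;> simp [ValidRS] at h1
    | cons y c' =>
      cases x <;> cases y <;> simp only [ValidRS] at h1 h2 <;>
        simp only [merge, List.cons.injEq] at hm
      · rw [ih c' α.tail β h1.2 h2.2 hm.2]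
      · -- x = false, y = true : contradiction
        exfalso
        obtain ⟨hne, -⟩ := h1
        obtain ⟨-, hforall, -⟩ := h2
        exact hforall α.headI (headI_mem_of_ne_nil hne) (Or.inr (Or.inl hm.1))
      · exfalso
        obtain ⟨hne, -⟩ := h2
        obtain ⟨-, hforall, -⟩ := h1
        exact hforall α.headI (headI_mem_of_ne_nil hne) (Or.inr (Or.inl hm.1.symm))
      · rw [ih c' α β.tail h1.2.2 h2.2.2 hm.2]

/-- distinct restricted shuffles of α with β give distinct words. -/
theorem restricted_shuffle_injective (ω : Equiv.Perm ℕ) (α β : List ℕ)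
    (h : IsReducedWordOf (α ++ β) ω) :
    ∀ c₁ c₂ : List Bool, ValidRS c₁ α β → ValidRS c₂ α β →
      merge c₁ α β = merge c₂ α β → c₁ = c₂ := by
  exact fun c₁ c₂ h1 h2 hm => merge_validRS_inj c₁ c₂ α β h1 h2 hm
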